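/- Let v ∈ ℝⁿ ∖ {0}, let D = {0, d₂v, d₃v, …, d_q v} ⊂ ℝⁿ with d₂, …, d_q ∈ ℝ (a collinear digit set), and let T = pI for a real number p with |p| > 1. Let F = F(T,D), let K be the convex hull of F, and let K₁ = ⋃_{d ∈ D} T⁻¹(K + d). Then F is connected if and only if K = K₁. -/

import Mathlib

open EMetric Metric Set
open scoped NNReal ENNReal

/-- The convex hull of a nonempty compact subset of `ℝ` is compact. -/
theorem isCompact_convexHull_real {E : Set ℝ} (hE : IsCompact E) (hne : E.Nonempty) :
    IsCompact (convexHull ℝ E) := by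
  have heq : convexHull ℝ E = Icc (sInf E) (sSup E) := by
    apply Subset.antisymm
    · exact convexHull_min
        (fun x hx => ⟨csInf_le hE.bddBelow hx, le_csSup hE.bddAbove hx⟩) (convex_Icc _ _)
    · rw [← segment_eq_Icc (csInf_le_csSup hne hE.bddBelow hE.bddAbove)]
      exact (convex_convexHull ℝ E).segment_subset
        (subset_convexHull _ _ (hE.sInf_mem hne)) (subset_convexHull _ _ (hE.sSup_mem hne))
  rw [heq]; exact isCompact_Icc

/-- Uniqueness of the attractor: two nonempty compact fixed sets of the same
contractive IFS coincide. -/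
theorem attractor_unique {n : ℕ} (D : Finset (Fin n → ℝ)) (p : ℝ) (hp : 1 < |p|)
    (A B : Set (Fin n → ℝ)) (hAne : A.Nonempty) (hAc : IsCompact A)
    (hBne : B.Nonempty) (hBc : IsCompact B)
    (hA : A = ⋃ d ∈ D, (fun x => p⁻¹ • (x + d)) '' A)
    (hB : B = ⋃ d ∈ D, (fun x => p⁻¹ • (x + d)) '' B) : A = B := by
  set r : ℝ≥0 := ‖p⁻¹‖₊ with hr
  have hrlt : (r : ℝ≥0∞) < 1 := by
    have : |p⁻¹| < 1 := by
      rw [abs_inv, inv_lt_one_iff₀]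
      right; exact hp
    simpa [hr, ENNReal.coe_lt_one_iff, ← NNReal.coe_lt_one, Real.norm_eq_abs, abs_inv] using this
  set H := hausdorffEdist A B with hH
  have hHne : H ≠ ⊤ :=
    hausdorffEdist_ne_top_of_nonempty_of_bounded hAne hBne hAc.isBounded hBc.isBounded
  have key : ∀ (X Y : Set (Fin n → ℝ)), Y.Nonempty → IsCompact Y →
      (Y = ⋃ d ∈ D, (fun x => p⁻¹ • (x + d)) '' Y) →
      ∀ x ∈ (⋃ d ∈ D, (fun x => p⁻¹ • (x + d)) '' X),
        ∃ y ∈ Y, edist x y ≤ (r : ℝ≥0∞) * hausdorffEdist X Y := by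
    intro X Y hYne hYc hYfix x hx
    simp only [mem_iUnion, mem_image] at hx
    obtain ⟨d, hd, a, ha, rfl⟩ := hx
    obtain ⟨b, hb, hab⟩ := hYc.exists_infEdist_eq_edist hYne a
    refine ⟨p⁻¹ • (b + d), ?_, ?_⟩
    · rw [hYfix]
      simp only [mem_iUnion, mem_image]
      exact ⟨d, hd, b, hb, rfl⟩
    · have h1 : edist (p⁻¹ • (a + d)) (p⁻¹ • (b + d)) = (r : ℝ≥0∞) * edist a b := by
        rw [edist_smul₀]
        simp [ENNReal.smul_def, edist_add_right, hr, nnnorm_inv]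
      rw [h1]
      refine mul_le_mul_right ?_ _
      rw [← hab]
      exact infEdist_le_hausdorffEdist_of_mem ha
  have hle : H ≤ (r : ℝ≥0∞) * H := by
    have h1 : ∀ x ∈ A, ∃ y ∈ B, edist x y ≤ (r : ℝ≥0∞) * H := by
      intro x hx
      rw [hA] at hx
      exact key A B hBne hBc hB x hx
    have h2 : ∀ x ∈ B, ∃ y ∈ A, edist x y ≤ (r : ℝ≥0∞) * H := by
      intro x hx
      rw [hB] at hx
      have := key B A hAne hAc hA x hx
      have hc : hausdorffEdist B A = H := hausdorffEDist_comm
      rw [hc] at this; exact this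
    exact hausdorffEdist_le_of_mem_edist h1 h2
  have hH0 : H = 0 := by
    by_contra h0
    have : (r : ℝ≥0∞) * H < 1 * H := ENNReal.mul_lt_mul_left h0 hHne hrlt
    rw [one_mul] at this
    exact absurd (lt_of_le_of_lt hle this) (lt_irrefl _)
  exact (hausdorffEdist_zero_iff_eq_of_closed hAc.isClosed hBc.isClosed).mp hH0

theorem stmt1 (n : ℕ) (v : Fin n → ℝ) (hv : v ≠ 0)
    (D : Finset (Fin n → ℝ)) (h0 : (0 : Fin n → ℝ) ∈ D)
    (hcol : ∀ d ∈ D, ∃ c : ℝ, d = c • v)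
    (p : ℝ) (hp : 1 < |p|)
    (F : Set (Fin n → ℝ)) (hne : F.Nonempty) (hcpt : IsCompact F)
    (hfix : F = ⋃ d ∈ D, (fun x => p⁻¹ • (x + d)) '' F) :
    IsConnected F ↔
      convexHull ℝ F = ⋃ d ∈ D, (fun x => p⁻¹ • (x + d)) '' (convexHull ℝ F) := by
  -- Every point of `F` is killed by any functional killing `v`.
  have key : ∀ (φ : Module.Dual ℝ (Fin n → ℝ)), φ v = 0 → ∀ x ∈ F, φ x = 0 := by
    intro φ hφv
    have hφc : Continuous φ := φ.continuous_of_finiteDimensional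
    obtain ⟨x₀, hx₀F, hmax⟩ := hcpt.exists_isMaxOn hne ((continuous_abs.comp hφc).continuousOn)
    have hx₀ : |φ x₀| = 0 := by
      have hx₀' := hx₀F
      rw [hfix] at hx₀'
      simp only [mem_iUnion, mem_image] at hx₀'
      obtain ⟨d, hd, a, ha, hae⟩ := hx₀'
      obtain ⟨c, rfl⟩ := hcol d hd
      have hφd : φ (c • v) = 0 := by rw [map_smul, hφv, smul_eq_mul, mul_zero]
      have heq : φ x₀ = p⁻¹ * φ a := by
        rw [← hae, map_smul, map_add, hφd, add_zero, smul_eq_mul]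
      have hp0 : (0:ℝ) < |p| := lt_trans one_pos hp
      have habs : |p| * |φ x₀| = |φ a| := by
        rw [heq, abs_mul, abs_inv]; field_simp
      have hle : |φ a| ≤ |φ x₀| := hmax ha
      nlinarith [abs_nonneg (φ x₀)]
    intro x hx
    have : |φ x| ≤ 0 := by rw [← hx₀]; exact hmax hx
    exact abs_nonpos_iff.mp this
  -- Every point of `F` is a multiple of `v`.
  have hspan : ∀ x ∈ F, ∃ c : ℝ, x = c • v := by
    intro x hx
    have hmem : x ∈ Submodule.span ℝ {v} := by
      set W := Submodule.span ℝ {v} with hW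
      have : W.mkQ x = 0 := by
        rw [← Module.forall_dual_apply_eq_zero_iff ℝ]
        intro ψ
        have hψv : (ψ ∘ₗ W.mkQ) v = 0 := by
          simp [Submodule.mkQ_apply, (Submodule.Quotient.mk_eq_zero W).mpr
            (Submodule.mem_span_singleton_self v)]
        exact key (ψ ∘ₗ W.mkQ) hψv x hx
      simpa [Submodule.mkQ_apply, Submodule.Quotient.mk_eq_zero] using this
    obtain ⟨c, hc⟩ := Submodule.mem_span_singleton.mp hmem
    exact ⟨c, hc.symm⟩
  -- A functional with `φ v = 1`.
  obtain ⟨φ₀, hφ₀⟩ : ∃ φ : Module.Dual ℝ (Fin n → ℝ), φ v ≠ 0 := by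
    by_contra h
    push_neg at h
    exact hv ((Module.forall_dual_apply_eq_zero_iff ℝ v).mp h)
  set φ : Module.Dual ℝ (Fin n → ℝ) := (φ₀ v)⁻¹ • φ₀ with hφdef
  have hφv : φ v = 1 := by
    simp [hφdef, smul_eq_mul, inv_mul_cancel₀ hφ₀]
  have hφc : Continuous φ := φ.continuous_of_finiteDimensional
  set ℓ : ℝ →ₗ[ℝ] (Fin n → ℝ) := LinearMap.toSpanSingleton ℝ (Fin n → ℝ) v with hℓ
  have hℓc : Continuous ℓ := ℓ.continuous_of_finiteDimensional
  have hFeq : F = ℓ '' (φ '' F) := by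
    apply Subset.antisymm
    · intro x hx
      obtain ⟨c, rfl⟩ := hspan x hx
      refine ⟨φ (c • v), ⟨c • v, hx, rfl⟩, ?_⟩
      simp [hℓ, LinearMap.toSpanSingleton_apply, map_smul, hφv]
    · rintro _ ⟨_, ⟨x, hx, rfl⟩, rfl⟩
      obtain ⟨c, rfl⟩ := hspan x hx
      simpa [hℓ, LinearMap.toSpanSingleton_apply, map_smul, hφv] using hx
  constructor
  · -- connected → F is convex, so `convexHull F = F` and the equation is `hfix`.
    intro hconn
    have hEconn : IsPreconnected (φ '' F) := (hconn.image φ hφc.continuousOn).isPreconnected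
    have hEconv : Convex ℝ (φ '' F) := hEconn.ordConnected.convex
    have hFconv : Convex ℝ F := by
      rw [hFeq]
      exact hEconv.linear_image ℓ
    rw [hFconv.convexHull_eq]
    exact hfix
  · intro hK
    set K := convexHull ℝ F with hKdef
    have hKne : K.Nonempty := hne.convexHull
    have hKc : IsCompact K := by
      have h1 : K = ℓ '' (convexHull ℝ (φ '' F)) := by
        rw [hKdef]
        conv_lhs => rw [hFeq]
        exact (ℓ.image_convexHull (φ '' F)).symm
      rw [h1]
      exact (isCompact_convexHull_real (hcpt.image hφc) (hne.image φ)).image hℓc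
    have hKF : K = F := attractor_unique D p hp K F hKne hKc hne hcpt hK hfix
    have : Convex ℝ F := hKF ▸ (convex_convexHull ℝ F)
    exact this.isConnected hne
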